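/- Let Γ be the Cayley graph of ℤ × ℤ with respect to the standard generators (so edges connect points at ℓ¹-distance 1). The first homology group H₁(Γ) (equivalently, the group of integer-valued 1-cycles) is a free (ℤ × ℤ)-module of rank 1, freely generated by the boundary cycle of the unit square with vertices (0,0), (1,0), (1,1), (0,1). -/

import Mathlib

namespace Stmt8

/-- Vertices of the Cayley graph of `ℤ × ℤ`. -/
abbrev V := ℤ × ℤ

/-- 1-chains of the grid graph: each edge is uniquely a translate of the
horizontal edge `(0,0) → (1,0)` (tag `false`) or the vertical edge
`(0,0) → (0,1)` (tag `true`), so oriented edges are encoded as pairs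
`(v, dir)` with `v` the tail. -/
abbrev C1 := (V × Bool) →₀ ℤ

/-- The head of an oriented edge. -/
def edgeHead (e : V × Bool) : V := if e.2 then e.1 + (0, 1) else e.1 + (1, 0)

/-- The boundary homomorphism from 1-chains to 0-chains. -/
noncomputable def bnd : C1 →+ (V →₀ ℤ) :=
  Finsupp.liftAddHom fun e =>
    { toFun := fun n => n • (Finsupp.single (edgeHead e) 1 - Finsupp.single e.1 1)
      map_zero' := by simp
      map_add' := fun a b => by simp [add_smul] }

/-- Translation of 1-chains by an element of `ℤ × ℤ`. -/
noncomputable def transE (g : V) : C1 →+ C1 :=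
  Finsupp.mapDomain.addMonoidHom (fun p => (g + p.1, p.2))

/-- The boundary cycle of the unit square with vertices
`(0,0), (1,0), (1,1), (0,1)`, traversed counterclockwise. -/
noncomputable def c : C1 :=
  Finsupp.single (((0 : ℤ), (0 : ℤ)), false) 1 + Finsupp.single (((1 : ℤ), (0 : ℤ)), true) 1
    - Finsupp.single (((0 : ℤ), (1 : ℤ)), false) 1 - Finsupp.single (((0 : ℤ), (0 : ℤ)), true) 1

/-! ### Auxiliary material -/

/-- The group ring `ℤ[ℤ × ℤ]`, as a type it is `V →₀ ℤ`. -/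
noncomputable abbrev Rng := AddMonoidAlgebra ℤ V

abbrev toR (F : V →₀ ℤ) : Rng := AddMonoidAlgebra.ofCoeff F

noncomputable def X1 : Rng := AddMonoidAlgebra.single ((1:ℤ),(0:ℤ)) 1
noncomputable def X2 : Rng := AddMonoidAlgebra.single ((0:ℤ),(1:ℤ)) 1

abbrev RZ := AddMonoidAlgebra ℤ ℤ
abbrev toZ (F : ℤ →₀ ℤ) : RZ := AddMonoidAlgebra.ofCoeff F

lemma mapT {G : Type*} [AddCommGroup G] (g : G) (F : G →₀ ℤ) :
    AddMonoidAlgebra.ofCoeff (Finsupp.mapDomain (· + g) F)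
      = AddMonoidAlgebra.ofCoeff F * AddMonoidAlgebra.single g 1 := by
  ext v
  rw [AddMonoidAlgebra.coeff_mul_single_apply, mul_one, AddMonoidAlgebra.coeff_ofCoeff,
    AddMonoidAlgebra.coeff_ofCoeff, ← sub_eq_add_neg]
  conv_lhs => rw [show v = (v - g) + g by abel]
  exact Finsupp.mapDomain_apply (add_left_injective g) F (v - g)

lemma trans_apply {G : Type*} [AddCommGroup G] (g : G) (F : G →₀ ℤ) (v : G) :
    Finsupp.mapDomain (· + g) F v = F (v - g) := by
  conv_lhs => rw [show v = (v - g) + g by abel]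
  exact Finsupp.mapDomain_apply (add_left_injective g) F (v - g)

lemma mapDomain_apply_sum {α β M : Type*} [DecidableEq β] [AddCommMonoid M] (f : α → β)
    (h : α →₀ M) (b : β) :
    Finsupp.mapDomain f h b = ∑ a ∈ h.support, if f a = b then h a else 0 := by
  rw [Finsupp.mapDomain, Finsupp.sum_apply]
  simp [Finsupp.sum, Finsupp.single_apply]

/-- The key combinatorial step: a finitely supported function on `ℤ × ℤ` all of whose
column sums vanish is a "vertical difference" of a finitely supported function given
by partial sums along columns. -/
lemma core (h : V →₀ ℤ)
    (hcol : ∀ a : ℤ, (∑ e ∈ h.support, if e.1 = a then h e else 0) = 0) :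
    ∃ F : V →₀ ℤ, ∀ v : V, h v = F v - F (v - ((0:ℤ),(1:ℤ))) := by
  classical
  by_cases hz : h = 0
  · exact ⟨0, by simp [hz]⟩
  have hsne : h.support.Nonempty := Finsupp.support_nonempty_iff.mpr hz
  set B := h.support.image Prod.snd with hB
  have hBne : B.Nonempty := hsne.image _
  set f : V → ℤ := fun v => ∑ e ∈ h.support, if e.1 = v.1 ∧ e.2 ≤ v.2 then h e else 0 with hf
  have hfin : (Function.support f).Finite := by
    apply Set.Finite.subset
      ((h.support.image Prod.fst ×ˢ Finset.Icc (B.min' hBne) (B.max' hBne)).finite_toSet)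
    intro v hv
    simp only [Function.mem_support, hf] at hv
    obtain ⟨e0, he0s, he0⟩ := Finset.exists_ne_zero_of_sum_ne_zero hv
    have he0' : e0.1 = v.1 ∧ e0.2 ≤ v.2 := by
      by_contra hc; simp [hc] at he0
    have hupper : v.2 ≤ B.max' hBne := by
      by_contra hge
      push_neg at hge
      apply hv
      calc (∑ e ∈ h.support, if e.1 = v.1 ∧ e.2 ≤ v.2 then h e else 0)
          = ∑ e ∈ h.support, if e.1 = v.1 then h e else 0 := by
            refine Finset.sum_congr rfl fun e he => ?_
            have : e.2 ≤ v.2 := le_trans (B.le_max' e.2 (Finset.mem_image_of_mem _ he)) hge.le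
            simp [this]
        _ = 0 := hcol v.1
    have hlower : B.min' hBne ≤ v.2 :=
      le_trans (B.min'_le e0.2 (Finset.mem_image_of_mem _ he0s)) he0'.2
    simp only [Finset.coe_product, Set.mem_prod, Finset.mem_coe, Finset.mem_image,
      Finset.mem_Icc]
    exact ⟨⟨e0, he0s, he0'.1⟩, hlower, hupper⟩
  refine ⟨Finsupp.ofSupportFinite f hfin, fun v => ?_⟩
  have hFc : ∀ w, Finsupp.ofSupportFinite f hfin w = f w := fun w => rfl
  rw [hFc, hFc, hf]
  simp only
  have h1 : (v - ((0:ℤ),(1:ℤ))).1 = v.1 := by simp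
  have h2 : (v - ((0:ℤ),(1:ℤ))).2 = v.2 - 1 := by simp
  rw [h1, h2, ← Finset.sum_sub_distrib]
  have : ∀ e ∈ h.support,
      ((if e.1 = v.1 ∧ e.2 ≤ v.2 then h e else 0)
        - (if e.1 = v.1 ∧ e.2 ≤ v.2 - 1 then h e else 0))
        = if e = v then h e else 0 := by
    rintro ⟨e1, e2⟩ he
    obtain ⟨v1, v2⟩ := v
    simp only [Prod.mk.injEq]
    set k := h (e1, e2) with hk
    split_ifs <;> omega
  rw [Finset.sum_congr rfl this, Finset.sum_ite_eq' h.support v h]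
  split_ifs with hv
  · rfl
  · exact Finsupp.notMem_support_iff.mp hv

/-- The comparison map: `F` goes to the `F`-weighted sum of translates of the square `c`. -/
noncomputable def Φ : (V →₀ ℤ) →+ C1 :=
  Finsupp.mapDomain.addMonoidHom (fun v : V => (v, false))
    - Finsupp.mapDomain.addMonoidHom (fun v : V => (v + (0,1), false))
    + Finsupp.mapDomain.addMonoidHom (fun v : V => (v + (1,0), true))
    - Finsupp.mapDomain.addMonoidHom (fun v : V => (v, true))

lemma Φ_single (v : V) (n : ℤ) :
    Φ (Finsupp.single v n) = Finsupp.single (v, false) n - Finsupp.single (v + (0,1), false) n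
      + Finsupp.single (v + (1,0), true) n - Finsupp.single (v, true) n := by
  simp [Φ, Finsupp.mapDomain.addMonoidHom_apply, Finsupp.mapDomain_single]

lemma transE_c (g : V) : transE g c = Finsupp.single (g, false) 1
    - Finsupp.single (g + (0,1), false) 1
    + Finsupp.single (g + (1,0), true) 1 - Finsupp.single (g, true) 1 := by
  simp only [transE, c, Finsupp.mapDomain.addMonoidHom_apply, map_add, map_sub,
    Finsupp.mapDomain_single]
  norm_num [add_comm]
  simp only [Prod.mk_zero_zero, add_zero]
  abel

lemma Φ_single_one (g : V) : Φ (Finsupp.single g 1) = transE g c := by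
  rw [Φ_single, transE_c]

/-- Projection onto the horizontal part of a 1-chain. -/
noncomputable def πh : C1 →+ (V →₀ ℤ) :=
  Finsupp.comapDomain.addMonoidHom (f := fun v : V => (v, false))
    (fun a b hab => by simpa [Prod.ext_iff] using hab)

/-- Projection onto the vertical part of a 1-chain. -/
noncomputable def πv : C1 →+ (V →₀ ℤ) :=
  Finsupp.comapDomain.addMonoidHom (f := fun v : V => (v, true))
    (fun a b hab => by simpa [Prod.ext_iff] using hab)

lemma πh_apply (x : C1) (v : V) : πh x v = x (v, false) := rfl
lemma πv_apply (x : C1) (v : V) : πv x v = x (v, true) := rfl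

lemma πh_single_f (w : V) (n : ℤ) : πh (Finsupp.single (w, false) n) = Finsupp.single w n := by
  ext v; simp [πh_apply, Finsupp.single_apply, Prod.ext_iff]
lemma πh_single_t (w : V) (n : ℤ) : πh (Finsupp.single (w, true) n) = 0 := by
  ext v; simp [πh_apply, Finsupp.single_apply]
lemma πv_single_f (w : V) (n : ℤ) : πv (Finsupp.single (w, false) n) = 0 := by
  ext v; simp [πv_apply, Finsupp.single_apply]
lemma πv_single_t (w : V) (n : ℤ) : πv (Finsupp.single (w, true) n) = Finsupp.single w n := by
  ext v; simp [πv_apply, Finsupp.single_apply, Prod.ext_iff]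

/-- Translation by `(1,0)` on 0-chains. -/
noncomputable def T1 : (V →₀ ℤ) →+ (V →₀ ℤ) :=
  Finsupp.mapDomain.addMonoidHom (· + ((1:ℤ),(0:ℤ)))
/-- Translation by `(0,1)` on 0-chains. -/
noncomputable def T2 : (V →₀ ℤ) →+ (V →₀ ℤ) :=
  Finsupp.mapDomain.addMonoidHom (· + ((0:ℤ),(1:ℤ)))

lemma T1_eq (G : V →₀ ℤ) : toR (T1 G) = toR G * X1 := by
  rw [T1, Finsupp.mapDomain.addMonoidHom_apply]; exact mapT _ _
lemma T2_eq (G : V →₀ ℤ) : toR (T2 G) = toR G * X2 := by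
  rw [T2, Finsupp.mapDomain.addMonoidHom_apply]; exact mapT _ _

lemma bnd_eq : bnd = (T1.comp πh - πh) + (T2.comp πv - πv) := by
  apply Finsupp.addHom_ext
  rintro ⟨v, b⟩ n
  have : bnd (Finsupp.single (v,b) n)
      = n • (Finsupp.single (edgeHead (v,b)) 1 - Finsupp.single v 1) :=
    Finsupp.liftAddHom_apply_single _ _ _
  rw [this]
  cases b <;>
    simp [edgeHead, T1, T2, πh_single_f, πh_single_t, πv_single_f, πv_single_t,
      Finsupp.mapDomain.addMonoidHom_apply, Finsupp.mapDomain_single, smul_sub,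
      Finsupp.smul_single, smul_eq_mul]

lemma πhΦ : πh.comp Φ = AddMonoidHom.id _ - T2 := by
  apply Finsupp.addHom_ext
  intro v n
  simp [Φ_single, πh_single_f, πh_single_t, T2,
    Finsupp.mapDomain.addMonoidHom_apply, Finsupp.mapDomain_single]

lemma πvΦ : πv.comp Φ = T1 - AddMonoidHom.id _ := by
  apply Finsupp.addHom_ext
  intro v n
  simp [Φ_single, πv_single_f, πv_single_t, T1,
    Finsupp.mapDomain.addMonoidHom_apply, Finsupp.mapDomain_single]

lemma eq_of_proj (x y : C1) (h1 : πh x = πh y) (h2 : πv x = πv y) : x = y := by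
  ext ⟨v, b⟩
  cases b
  · exact Finsupp.ext_iff.mp h1 v
  · exact Finsupp.ext_iff.mp h2 v

lemma πhΦ_apply (F : V →₀ ℤ) : πh (Φ F) = F - T2 F := by
  simpa using DFunLike.congr_fun πhΦ F

lemma πvΦ_apply (F : V →₀ ℤ) : πv (Φ F) = T1 F - F := by
  simpa using DFunLike.congr_fun πvΦ F

lemma bndΦ (F : V →₀ ℤ) : bnd (Φ F) = 0 := by
  have hb := DFunLike.congr_fun bnd_eq (Φ F)
  rw [hb]
  simp only [AddMonoidHom.add_apply, AddMonoidHom.sub_apply, AddMonoidHom.comp_apply,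
    πhΦ_apply, πvΦ_apply]
  apply AddMonoidAlgebra.ofCoeff_injective
  show toR (T1 (F - T2 F)) - (toR F - toR (T2 F))
      + (toR (T2 (T1 F - F)) - (toR (T1 F) - toR F)) = 0
  rw [T1_eq (F - T2 F), T2_eq (T1 F - F)]
  show (toR F - toR (T2 F)) * X1 - (toR F - toR (T2 F))
      + ((toR (T1 F) - toR F) * X2 - (toR (T1 F) - toR F)) = 0
  rw [T2_eq F, T1_eq F]
  have : (toR F - toR F * X2) * X1 - (toR F - toR F * X2)
      + ((toR F * X1 - toR F) * X2 - (toR F * X1 - toR F)) = (0 : Rng) := by ring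
  exact this

lemma one_sub_X2_ne : ((1:Rng) - X2) ≠ 0 := by
  intro hc
  have hc' : (Finsupp.single ((0:ℤ),(0:ℤ)) (1:ℤ)
      - Finsupp.single ((0:ℤ),(1:ℤ)) 1 : V →₀ ℤ) = 0 := congrArg AddMonoidAlgebra.coeff hc
  have := congrArg (fun z : V →₀ ℤ => z ((0:ℤ),(0:ℤ))) hc'
  simp [Finsupp.single_apply, Prod.ext_iff] at this

lemma X2_sub_one_ne : (X2 - (1:Rng)) ≠ 0 := by
  intro hc
  apply one_sub_X2_ne
  linear_combination -hc

lemma singleZ_sub_one_ne : (AddMonoidAlgebra.single (1:ℤ) (1:ℤ) - 1 : RZ) ≠ 0 := by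
  intro hc
  have hc' : (Finsupp.single (1:ℤ) (1:ℤ) - Finsupp.single (0:ℤ) 1 : ℤ →₀ ℤ) = 0 :=
    congrArg AddMonoidAlgebra.coeff hc
  have h1 : (Finsupp.single (1:ℤ) (1:ℤ)) 1 - (Finsupp.single (0:ℤ) (1:ℤ)) 1 = 0 := by
    have := congrArg (fun z : ℤ →₀ ℤ => z (1:ℤ)) hc'
    simpa [Finsupp.sub_apply] using this
  rw [Finsupp.single_eq_same, Finsupp.single_eq_of_ne (by norm_num)] at h1
  norm_num at h1

lemma Φ_inj : Function.Injective Φ := by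
  rw [injective_iff_map_eq_zero]
  intro F hF
  have h1 : (0 : V →₀ ℤ) = F - T2 F := by
    rw [← πhΦ_apply, hF, map_zero]
  have h1' : (0:Rng) = toR F - toR F * X2 := by
    rw [← T2_eq]; exact congrArg toR h1
  have h2 : (toR F * ((1:Rng) - X2)) = 0 := by linear_combination -h1'
  rcases mul_eq_zero.mp h2 with h | h
  · exact AddMonoidAlgebra.ofCoeff_eq_zero.mp h
  · exact absurd h one_sub_X2_ne

lemma surj (x : C1) (hx : bnd x = 0) : ∃ F : V →₀ ℤ, Φ F = x := by
  classical
  have hb := DFunLike.congr_fun bnd_eq x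
  rw [hx] at hb
  simp only [AddMonoidHom.add_apply, AddMonoidHom.sub_apply, AddMonoidHom.comp_apply] at hb
  set H := πh x with hH
  set W := πv x with hW
  -- hb : 0 = T1 H - H + (T2 W - W)
  have he : (0:Rng) = toR H * X1 - toR H + (toR W * X2 - toR W) := by
    have hb2 : (0 : V →₀ ℤ) = T1 H - H + (T2 W - W) := hb
    rw [← T1_eq, ← T2_eq]
    exact congrArg toR hb2
  -- kill the second coordinate
  set ε : (V →₀ ℤ) →+ (ℤ →₀ ℤ) := Finsupp.mapDomain.addMonoidHom (Prod.fst : V → ℤ) with hε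
  have hc1 : Finsupp.mapDomain (Prod.fst : V → ℤ) (T1 H)
      = (toZ (Finsupp.mapDomain (Prod.fst : V → ℤ) H)
          * AddMonoidAlgebra.single (1:ℤ) (1:ℤ)).coeff := by
    rw [T1, Finsupp.mapDomain.addMonoidHom_apply, ← Finsupp.mapDomain_comp]
    have hfun : ((Prod.fst : V → ℤ) ∘ fun p : V => p + ((1:ℤ),(0:ℤ)))
        = (fun a : ℤ => a + 1) ∘ (Prod.fst : V → ℤ) := by
      funext p; simp
    rw [hfun, Finsupp.mapDomain_comp]
    exact congrArg AddMonoidAlgebra.coeff (mapT _ _)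
  have hc2 : Finsupp.mapDomain (Prod.fst : V → ℤ) (T2 W)
      = Finsupp.mapDomain (Prod.fst : V → ℤ) W := by
    rw [T2, Finsupp.mapDomain.addMonoidHom_apply, ← Finsupp.mapDomain_comp]
    have hfun : ((Prod.fst : V → ℤ) ∘ fun p : V => p + ((0:ℤ),(1:ℤ))) = (Prod.fst : V → ℤ) := by
      funext p; simp
    rw [hfun]
  have he2 := congrArg ε hb
  simp only [map_zero, map_add, map_sub, hε, Finsupp.mapDomain.addMonoidHom_apply,
    hc1, hc2] at he2
  -- he2 : 0 = toZ (mapDomain fst H) * single 1 1 - mapDomain fst H + (mapDomain fst W - mapDomain fst W)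
  have hEH : Finsupp.mapDomain (Prod.fst : V → ℤ) H = 0 := by
    have he2' : (0:RZ) = toZ (Finsupp.mapDomain (Prod.fst : V → ℤ) H)
        * AddMonoidAlgebra.single (1:ℤ) (1:ℤ) - toZ (Finsupp.mapDomain (Prod.fst : V → ℤ) H)
        + (toZ (Finsupp.mapDomain (Prod.fst : V → ℤ) W)
          - toZ (Finsupp.mapDomain (Prod.fst : V → ℤ) W)) := congrArg toZ he2
    have h3 : toZ (Finsupp.mapDomain (Prod.fst : V → ℤ) H)
        * (AddMonoidAlgebra.single (1:ℤ) (1:ℤ) - 1) = 0 := by linear_combination -he2'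
    rcases mul_eq_zero.mp h3 with h | h
    · exact AddMonoidAlgebra.ofCoeff_eq_zero.mp h
    · exact absurd h singleZ_sub_one_ne
  have hcol : ∀ a : ℤ, (∑ e ∈ H.support, if e.1 = a then H e else 0) = 0 := by
    intro a
    have h4 := Finsupp.ext_iff.mp hEH a
    rw [mapDomain_apply_sum] at h4
    exact h4
  obtain ⟨F, hFv⟩ := core H hcol
  have hHF : H = F - T2 F := by
    ext v
    rw [Finsupp.sub_apply, T2, Finsupp.mapDomain.addMonoidHom_apply, trans_apply]
    exact hFv v
  have hHF' : toR H = toR F - toR F * X2 := by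
    rw [hHF]
    show toR F - toR (T2 F) = _
    rw [T2_eq]
  have key : (toR W - (toR F * X1 - toR F)) * (X2 - 1) = (0:Rng) := by
    linear_combination (-1 : Rng) * he + ((1:Rng) - X1) * hHF'
  have hWF : toR W = toR F * X1 - toR F := by
    rcases mul_eq_zero.mp key with h | h
    · exact sub_eq_zero.mp h
    · exact absurd h X2_sub_one_ne
  refine ⟨F, eq_of_proj _ _ ?_ ?_⟩
  · rw [πhΦ_apply, ← hH]
    exact hHF.symm
  · rw [πvΦ_apply, ← hW]
    apply AddMonoidAlgebra.ofCoeff_injective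
    show toR (T1 F) - toR F = toR W
    rw [T1_eq F]
    exact hWF.symm

/-- The group of integer 1-cycles `H₁(Γ) = Z₁(Γ)` of the Cayley graph `Γ` of
`ℤ × ℤ` is a free `(ℤ × ℤ)`-module of rank 1, freely generated by the boundary
cycle `c` of the unit square: there is an additive isomorphism from the group
ring `ℤ[ℤ × ℤ]` to `ker ∂` sending the basis element `g` to the translate
`g + c` (this is exactly a `ℤ[ℤ × ℤ]`-module isomorphism onto the cycles). -/
theorem stmt8 :
    ∃ e : (V →₀ ℤ) ≃+ bnd.ker,
      ∀ g : V, ((e (Finsupp.single g 1) : bnd.ker) : C1) = transE g c := by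
  have hker : ∀ F : V →₀ ℤ, Φ F ∈ bnd.ker := fun F => AddMonoidHom.mem_ker.mpr (bndΦ F)
  let Φk : (V →₀ ℤ) →+ bnd.ker := Φ.codRestrict bnd.ker hker
  have hbij : Function.Bijective Φk := by
    constructor
    · intro a b hab
      exact Φ_inj (congrArg Subtype.val hab)
    · rintro ⟨x, hx⟩
      obtain ⟨F, hF⟩ := surj x (AddMonoidHom.mem_ker.mp hx)
      exact ⟨F, Subtype.ext hF⟩
  refine ⟨AddEquiv.ofBijective Φk hbij, fun g => ?_⟩
  show ((Φk (Finsupp.single g 1) : bnd.ker) : C1) = transE g c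
  exact Φ_single_one g

end Stmt8
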